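/- For every edit script δ̄ with δ̄(x̄) = ȳ between trees x̄ and ȳ over 𝒳, there exists an inverse edit script δ̄⁻¹ of the same length with δ̄⁻¹(ȳ) = x̄; moreover, if the cost function c is symmetric, then c(δ̄⁻¹, ȳ) = c(δ̄, x̄). -/

import Mathlib

namespace TED

/-- A tree over an alphabet `α`: a label together with a (possibly empty) list of children. -/
inductive PTree (α : Type) where
  | node : α → List (PTree α) → PTree α

/-- A forest over `α` is a finite list of trees; `[]` is the empty forest `ε`. -/
abbrev Forest (α : Type) := List (PTree α)

namespace PTree

/-- The label of (the root of) a tree. -/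
def label {α : Type} : PTree α → α
  | node a _ => a

/-- The children of (the root of) a tree. -/
def children {α : Type} : PTree α → List (PTree α)
  | node _ cs => cs

mutual
  /-- The number of nodes of a tree. -/
  def size {α : Type} : PTree α → ℕ
    | node _ cs => 1 + sizeL cs
  /-- The number of nodes of a forest. -/
  def sizeL {α : Type} : List (PTree α) → ℕ
    | [] => 0
    | t :: ts => size t + sizeL ts
end

mutual
  /-- The pre-order list of all subtrees of a tree. -/
  def subtreesT {α : Type} : PTree α → List (PTree α)
    | node a cs => node a cs :: subtreesL cs
  /-- The pre-order list of all subtrees of a forest. -/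
  def subtreesL {α : Type} : List (PTree α) → List (PTree α)
    | [] => []
    | t :: ts => subtreesT t ++ subtreesL ts
end

end PTree

open PTree

/-- The pre-order `π(X)` of a forest: the list of all its subtrees. -/
def preorder {α : Type} (F : Forest α) : List (PTree α) := PTree.subtreesL F

/-- The size `|X|` of a forest: the length of its pre-order. -/
def fsize {α : Type} (F : Forest α) : ℕ := (preorder F).length

/-- The `i`-th subtree `x̄_i` (1-indexed pre-order) of a forest, if it exists. -/
def treeAt {α : Type} (F : Forest α) (i : ℕ) : Option (PTree α) := (preorder F)[i - 1]?

/-- The label `x_i` of the `i`-th subtree, as an element of `𝒳 ∪ {−}`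
(`none` plays the role of the gap symbol `−`). -/
def labelAt {α : Type} (F : Forest α) (i : ℕ) : Option α := (treeAt F i).map PTree.label

/-- The number of nodes of the `i`-th subtree `x̄_i`. -/
def sizeAt {α : Type} (F : Forest α) (i : ℕ) : ℕ := ((treeAt F i).map PTree.size).getD 0

/-- A cost function over `α`: a real-valued function on `(𝒳 ∪ {−}) × (𝒳 ∪ {−})`,
where the gap symbol `−` is modelled by `none`. -/
abbrev Cost (α : Type) := Option α → Option α → ℝ

/-- `c` is non-negative. -/
def Nonneg {α : Type} (c : Cost α) : Prop := ∀ x y, 0 ≤ c x y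
/-- `c` is self-equal. -/
def SelfEq {α : Type} (c : Cost α) : Prop := ∀ x, c x x = 0
/-- `c` is discernible. -/
def Discernible {α : Type} (c : Cost α) : Prop := ∀ x y, x ≠ y → 0 < c x y
/-- `c` is symmetric. -/
def Symm {α : Type} (c : Cost α) : Prop := ∀ x y, c x y = c y x
/-- `c` conforms to the triangular inequality. -/
def Triangle {α : Type} (c : Cost α) : Prop := ∀ x y z, c x z ≤ c x y + c y z

/-- Deletion of the first root: its children are spliced into its place. -/
def delRoot {α : Type} : Forest α → Forest α
  | [] => []
  | PTree.node _ cs :: ts => cs ++ ts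

/-- Replacement of the label of the first root by `y`. -/
def repRoot {α : Type} (y : α) : Forest α → Forest α
  | [] => []
  | PTree.node _ cs :: ts => PTree.node y cs :: ts

/-- Insertion of a new root labeled `y` at root level, adopting the trees
`l` to `r-1` of the forest as its children. -/
def insRoot {α : Type} (y : α) (l r : ℕ) (F : Forest α) : Forest α :=
  if r > F.length + 1 ∨ l > r ∨ l < 1 then F
  else if l = r then F.take (l - 1) ++ [PTree.node y []] ++ F.drop (l - 1)
  else F.take (l - 1) ++ [PTree.node y ((F.drop (l - 1)).take (r - l))] ++ F.drop (r - 1)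

/-- `del_i`: deletion of the node with pre-order index `i`. -/
def applyDel {α : Type} : ℕ → Forest α → Forest α
  | _, [] => []
  | i, PTree.node a cs :: ts =>
    if i < 1 then PTree.node a cs :: ts
    else if i = 1 then delRoot (PTree.node a cs :: ts)
    else if i ≤ size (PTree.node a cs) then PTree.node a (applyDel (i - 1) cs) :: ts
    else PTree.node a cs :: applyDel (i - size (PTree.node a cs)) ts
  termination_by _ F => sizeOf F

/-- `rep_{i,y}`: replacement of the label of the node with pre-order index `i` by `y`. -/
def applyRep {α : Type} (y : α) : ℕ → Forest α → Forest α
  | _, [] => []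
  | i, PTree.node a cs :: ts =>
    if i < 1 then PTree.node a cs :: ts
    else if i = 1 then repRoot y (PTree.node a cs :: ts)
    else if i ≤ size (PTree.node a cs) then PTree.node a (applyRep y (i - 1) cs) :: ts
    else PTree.node a cs :: applyRep y (i - size (PTree.node a cs)) ts
  termination_by _ F => sizeOf F

/-- `ins_{i,y,l,r}`: insertion of a node labeled `y` as a child of the node with
pre-order index `i` (at root level if `i = 0`), adopting that node's children
`l` through `r-1` as its children. -/
def applyIns {α : Type} (y : α) (l r : ℕ) : ℕ → Forest α → Forest α
  | 0, F => insRoot y l r F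
  | _ + 1, [] => []
  | i + 1, PTree.node a cs :: ts =>
    if i + 1 ≤ size (PTree.node a cs) then PTree.node a (applyIns y l r i cs) :: ts
    else PTree.node a cs :: applyIns y l r (i + 1 - size (PTree.node a cs)) ts
  termination_by _ F => sizeOf F

/-- The standard edits: deletions `del_i`, replacements `rep_{i,y}` and
insertions `ins_{i,y,l,r}`. -/
inductive Edit (α : Type) where
  | del (i : ℕ)
  | rep (i : ℕ) (y : α)
  | ins (i : ℕ) (y : α) (l r : ℕ)

/-- Application of a single edit to a forest. -/
def Edit.apply {α : Type} : Edit α → Forest α → Forest α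
  | .del i, F => applyDel i F
  | .rep i y, F => applyRep y i F
  | .ins i y l r, F => applyIns y l r i F

/-- Application of an edit script `δ̄ = δ₁,…,δ_T` to a forest (left to right). -/
def applyScript {α : Type} (δ : List (Edit α)) (F : Forest α) : Forest α :=
  δ.foldl (fun F e => e.apply F) F

open Classical in
/-- The cost of a single edit with respect to the forest it is applied to:
`0` if the edit leaves the forest unchanged, and otherwise `c(x_i, y)` for a
replacement, `c(x_i, −)` for a deletion and `c(−, y)` for an insertion. -/
noncomputable def editCost {α : Type} (c : Cost α) (e : Edit α) (F : Forest α) : ℝ :=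
  if e.apply F = F then 0
  else
    match e with
    | .del i => c (labelAt F i) none
    | .rep i y => c (labelAt F i) (some y)
    | .ins _ y _ _ => c none (some y)

/-- The cost `c(δ̄, X)` of an edit script: the sum of the costs of its edits,
each evaluated on the forest to which it is applied. -/
noncomputable def scriptCost {α : Type} (c : Cost α) : List (Edit α) → Forest α → ℝ
  | [], _ => 0
  | e :: es, F => editCost c e F + scriptCost c es (e.apply F)

/-! ### Auxiliary lemmas -/

section Aux

variable {α : Type}

mutual
  theorem length_subtreesT (t : PTree α) : (subtreesT t).length = size t := by
    match t with
    | .node a cs =>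
      rw [subtreesT, size, List.length_cons, length_subtreesL cs]
      omega
  theorem length_subtreesL (F : List (PTree α)) : (subtreesL F).length = sizeL F := by
    match F with
    | [] => rw [subtreesL, sizeL]; rfl
    | t :: ts =>
      rw [subtreesL, sizeL, List.length_append, length_subtreesT t, length_subtreesL ts]
end

theorem size_node (a : α) (cs : List (PTree α)) : size (PTree.node a cs) = 1 + sizeL cs := by
  rw [size]

theorem sizeL_cons (t : PTree α) (ts : List (PTree α)) :
    sizeL (t :: ts) = size t + sizeL ts := by rw [sizeL]

theorem sizeL_nil : sizeL ([] : List (PTree α)) = 0 := by rw [sizeL]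

theorem size_pos (t : PTree α) : 1 ≤ size t := by
  match t with
  | .node a cs => rw [size_node]; omega

theorem sizeL_append (A B : List (PTree α)) : sizeL (A ++ B) = sizeL A + sizeL B := by
  induction A with
  | nil => simp [sizeL_nil, sizeL]
  | cons t ts ih => simp [sizeL_cons, ih]; omega

theorem subtreesL_append (A B : List (PTree α)) :
    subtreesL (A ++ B) = subtreesL A ++ subtreesL B := by
  induction A with
  | nil => rw [subtreesL]; simp
  | cons t ts ih => simp only [List.cons_append]; rw [subtreesL, subtreesL, ih, List.append_assoc]

theorem preorder_cons (a : α) (cs ts : List (PTree α)) :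
    preorder (PTree.node a cs :: ts) = PTree.node a cs :: (subtreesL cs ++ subtreesL ts) := by
  show subtreesL _ = _
  rw [subtreesL, subtreesT]; simp

theorem treeAt_one (a : α) (cs ts : List (PTree α)) :
    treeAt (PTree.node a cs :: ts) 1 = some (PTree.node a cs) := by
  rw [treeAt, preorder_cons]; simp

theorem treeAt_left {i : ℕ} (a : α) (cs ts : List (PTree α)) (h1 : 2 ≤ i)
    (h2 : i ≤ size (PTree.node a cs)) :
    treeAt (PTree.node a cs :: ts) i = treeAt cs (i - 1) := by
  rw [size_node] at h2
  rw [treeAt, treeAt, preorder_cons]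
  have hi : i - 1 = (i - 2) + 1 := by omega
  rw [hi, List.getElem?_cons_succ]
  have hlt : i - 2 < (subtreesL cs).length := by rw [length_subtreesL]; omega
  rw [List.getElem?_append_left hlt, preorder]
  simp

theorem treeAt_right {i : ℕ} (a : α) (cs ts : List (PTree α))
    (h : size (PTree.node a cs) < i) :
    treeAt (PTree.node a cs :: ts) i = treeAt ts (i - size (PTree.node a cs)) := by
  rw [size_node] at h
  rw [treeAt, treeAt, preorder_cons]
  have hi : i - 1 = (i - 2) + 1 := by omega
  rw [hi, List.getElem?_cons_succ]
  have hge : (subtreesL cs).length ≤ i - 2 := by rw [length_subtreesL]; omega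
  rw [List.getElem?_append_right hge, length_subtreesL, preorder, size_node]
  congr 1
  omega

theorem treeAt_middle (P : List (PTree α)) (t : PTree α) (S : List (PTree α)) :
    treeAt (P ++ t :: S) (sizeL P + 1) = some t := by
  rw [treeAt]
  show (subtreesL _)[_]? = _
  rw [subtreesL_append]
  have hge : (subtreesL P).length ≤ sizeL P + 1 - 1 := by rw [length_subtreesL]; omega
  rw [List.getElem?_append_right hge, length_subtreesL]
  have : sizeL P + 1 - 1 - sizeL P = 0 := by omega
  rw [this, subtreesL]
  match t with
  | .node b ds => rw [subtreesT]; simp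

/-- Deleting the node at pre-order position `sizeL P + 1` splices its children in. -/
theorem applyDel_middle (P : List (PTree α)) (y : α) (C S : List (PTree α)) :
    applyDel (sizeL P + 1) (P ++ PTree.node y C :: S) = P ++ (C ++ S) := by
  induction P with
  | nil =>
    rw [sizeL_nil]; simp only [List.nil_append]
    rw [applyDel]
    simp [delRoot]
  | cons t ts ih =>
    match t with
    | .node a cs =>
      simp only [List.cons_append]
      rw [applyDel]
      have h1 : ¬ (sizeL (PTree.node a cs :: ts) + 1 < 1) := by omega
      have h2 : sizeL (PTree.node a cs :: ts) + 1 ≠ 1 := by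
        rw [sizeL_cons]; have := size_pos (PTree.node a cs); omega
      have h3 : ¬ (sizeL (PTree.node a cs :: ts) + 1 ≤ size (PTree.node a cs)) := by
        rw [sizeL_cons]; omega
      rw [if_neg h1, if_neg h2, if_neg h3]
      have h4 : sizeL (PTree.node a cs :: ts) + 1 - size (PTree.node a cs) = sizeL ts + 1 := by
        rw [sizeL_cons]; have := size_pos (PTree.node a cs); omega
      rw [h4, ih]

theorem insRoot_cons (y : α) (l r : ℕ) (t : PTree α) (F : Forest α) (hl : 1 ≤ l) :
    insRoot y (l + 1) (r + 1) (t :: F) = t :: insRoot y l r F := by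
  rw [insRoot, insRoot]
  by_cases hbad : r > F.length + 1 ∨ l > r ∨ l < 1
  · rw [if_pos, if_pos hbad]
    simp only [List.length_cons]
    omega
  · rw [if_neg, if_neg hbad]
    · push_neg at hbad
      obtain ⟨hr, hlr, _⟩ := hbad
      by_cases heq : l = r
      · rw [if_pos (by omega : l + 1 = r + 1), if_pos heq]
        have h1 : l + 1 - 1 = (l - 1) + 1 := by omega
        rw [h1, List.take_succ_cons, List.drop_succ_cons]
        simp
      · rw [if_neg (by omega : ¬ l + 1 = r + 1), if_neg heq]
        have h1 : l + 1 - 1 = (l - 1) + 1 := by omega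
        have h2 : r + 1 - 1 = (r - 1) + 1 := by omega
        have h3 : r + 1 - (l + 1) = r - l := by omega
        rw [h1, h2, h3, List.take_succ_cons, List.drop_succ_cons, List.drop_succ_cons]
        simp
    · simp only [List.length_cons]
      omega

/-- Inserting at root level right before position `sizeL P + 1`. -/
theorem insRoot_middle (y : α) (P C S : Forest α) :
    insRoot y (P.length + 1) (P.length + C.length + 1) (P ++ (C ++ S))
      = P ++ PTree.node y C :: S := by
  rw [insRoot]
  have hlen : (P ++ (C ++ S)).length = P.length + C.length + S.length := by
    simp; omega
  rw [if_neg (by omega)]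
  have e1 : P.length + 1 - 1 = P.length := by omega
  by_cases hC : C = []
  · subst hC
    rw [if_pos (by simp)]
    rw [e1, List.take_left, List.nil_append, List.drop_left]
    simp
  · have hCl : C.length ≠ 0 := fun h => hC (List.length_eq_zero_iff.mp h)
    rw [if_neg (by omega)]
    have e2 : P.length + C.length + 1 - (P.length + 1) = C.length := by omega
    have e3 : P.length + C.length + 1 - 1 = P.length + C.length := by omega
    rw [e1, e2, e3, List.take_left, List.drop_left]
    have e5 : List.drop (P.length + C.length) (P ++ (C ++ S)) = S := by
      rw [show P ++ (C ++ S) = (P ++ C) ++ S by simp,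
          show P.length + C.length = (P ++ C).length by simp]
      exact List.drop_left
    rw [e5, List.take_left]
    simp

theorem sizeL_applyRep (y : α) (i : ℕ) (F : Forest α) :
    sizeL (applyRep y i F) = sizeL F := by
  match F with
  | [] => rw [applyRep]
  | .node a cs :: ts =>
    rw [applyRep]
    split
    · rfl
    · split
      · rename_i h1 h2
        subst h2
        rw [repRoot]
        rw [sizeL_cons, sizeL_cons, size_node, size_node]
      · split
        · rw [sizeL_cons, sizeL_cons, size_node, size_node, sizeL_applyRep]
        · rw [sizeL_cons, sizeL_cons, sizeL_applyRep]
  termination_by sizeOf F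

/-- Inverse of a replacement. -/
theorem rep_inv (i : ℕ) (y : α) (F : Forest α) :
    applyRep y i F = F ∨
    ∃ a : α, labelAt F i = some a ∧ labelAt (applyRep y i F) i = some y ∧
      applyRep a i (applyRep y i F) = F := by
  match F with
  | [] => left; rw [applyRep]
  | .node a cs :: ts =>
    rw [applyRep]
    by_cases h1 : i < 1
    · left; rw [if_pos h1]
    rw [if_neg h1]
    by_cases h2 : i = 1
    · subst h2
      right
      refine ⟨a, ?_, ?_, ?_⟩
      · rw [labelAt, treeAt_one]; rfl
      · rw [if_pos rfl, repRoot, labelAt, treeAt_one]; rfl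
      · rw [if_pos rfl, repRoot, applyRep, if_neg h1, if_pos rfl, repRoot]
    rw [if_neg h2]
    by_cases h3 : i ≤ size (PTree.node a cs)
    · rw [if_pos h3]
      rcases rep_inv (i - 1) y cs with hcs | ⟨b, hb1, hb2, hb3⟩
      · left; rw [hcs]
      · right
        refine ⟨b, ?_, ?_, ?_⟩
        · rw [labelAt, treeAt_left a cs ts (by omega) h3, ← labelAt]; exact hb1
        · have hsz : size (PTree.node a (applyRep y (i-1) cs)) = size (PTree.node a cs) := by
            rw [size_node, size_node, sizeL_applyRep]
          rw [labelAt, treeAt_left a _ ts (by omega) (by omega), ← labelAt]; exact hb2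
        · have hsz : size (PTree.node a (applyRep y (i-1) cs)) = size (PTree.node a cs) := by
            rw [size_node, size_node, sizeL_applyRep]
          rw [applyRep, if_neg h1, if_neg h2, if_pos (by omega), hb3]
    · rw [if_neg h3]
      rcases rep_inv (i - size (PTree.node a cs)) y ts with hts | ⟨b, hb1, hb2, hb3⟩
      · left; rw [hts]
      · right
        refine ⟨b, ?_, ?_, ?_⟩
        · rw [labelAt, treeAt_right a cs ts (by omega), ← labelAt]; exact hb1
        · rw [labelAt, treeAt_right a cs _ (by omega), ← labelAt]; exact hb2
        · rw [applyRep, if_neg h1, if_neg h2, if_neg h3, hb3]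
  termination_by sizeOf F

/-- Inverse of a deletion: an insertion putting the deleted node back. -/
theorem del_inv (i : ℕ) (F : Forest α) :
    applyDel i F = F ∨
    ∃ (a : α) (cs : List (PTree α)) (j l r : ℕ),
      treeAt F i = some (PTree.node a cs) ∧ 1 ≤ l ∧ l ≤ r ∧
      j ≤ sizeL (applyDel i F) ∧ applyIns a l r j (applyDel i F) = F := by
  match F with
  | [] => left; rw [applyDel]
  | .node a cs :: ts =>
    rw [applyDel]
    by_cases h1 : i < 1
    · left; rw [if_pos h1]
    rw [if_neg h1]
    by_cases h2 : i = 1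
    · subst h2
      right
      rw [if_pos rfl, delRoot]
      refine ⟨a, cs, 0, 1, cs.length + 1, treeAt_one a cs ts, le_refl 1, by omega, by omega, ?_⟩
      rw [applyIns]
      have := insRoot_middle a ([] : Forest α) cs ts
      simpa using this
    rw [if_neg h2]
    by_cases h3 : i ≤ size (PTree.node a cs)
    · rw [if_pos h3]
      rcases del_inv (i - 1) cs with hcs | ⟨b, ds, j, l, r, hb1, hb2, hb3, hb4, hb5⟩
      · left; rw [hcs]
      · right
        refine ⟨b, ds, j + 1, l, r, ?_, hb2, hb3, ?_, ?_⟩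
        · rw [treeAt_left a cs ts (by omega) h3]; exact hb1
        · rw [sizeL_cons, size_node]; omega
        · rw [applyIns, if_pos (by rw [size_node]; omega), hb5]
    · rw [if_neg h3]
      rcases del_inv (i - size (PTree.node a cs)) ts with hts | ⟨b, ds, j, l, r, hb1, hb2, hb3, hb4, hb5⟩
      · left; rw [hts]
      · right
        by_cases hj : j = 0
        · subst hj
          refine ⟨b, ds, 0, l + 1, r + 1, ?_, by omega, by omega, by omega, ?_⟩
          · rw [treeAt_right a cs ts (by omega)]; exact hb1
          · rw [applyIns]
            rw [applyIns] at hb5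
            rw [insRoot_cons b l r _ _ hb2, hb5]
        · refine ⟨b, ds, j + size (PTree.node a cs), l, r, ?_, hb2, hb3, ?_, ?_⟩
          · rw [treeAt_right a cs ts (by omega)]; exact hb1
          · rw [sizeL_cons]; omega
          · have hpos := size_pos (PTree.node a cs)
            have hform : j + size (PTree.node a cs) = (j + size (PTree.node a cs) - 1) + 1 := by omega
            rw [hform, applyIns, if_neg (by omega)]
            have : j + size (PTree.node a cs) - 1 + 1 - size (PTree.node a cs) = j := by omega
            rw [this, hb5]
  termination_by sizeOf F

/-- Inverse of an insertion: a deletion of the inserted node. -/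
theorem ins_inv (j l r : ℕ) (y : α) (F : Forest α) :
    applyIns y l r j F = F ∨
    ∃ i : ℕ, 1 ≤ i ∧ i ≤ sizeL (applyIns y l r j F) ∧
      labelAt (applyIns y l r j F) i = some y ∧
      applyDel i (applyIns y l r j F) = F := by
  match j, F with
  | 0, F =>
    rw [applyIns, insRoot]
    by_cases hbad : r > F.length + 1 ∨ l > r ∨ l < 1
    · left; rw [if_pos hbad]
    rw [if_neg hbad]
    push_neg at hbad
    obtain ⟨hr, hlr, hl⟩ := hbad
    right
    by_cases heq : l = r
    · rw [if_pos heq]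
      refine ⟨sizeL (F.take (l-1)) + 1, by omega, ?_, ?_, ?_⟩
      · rw [show F.take (l-1) ++ [PTree.node y []] ++ F.drop (l-1)
              = F.take (l-1) ++ (PTree.node y [] :: F.drop (l-1)) by simp,
            sizeL_append, sizeL_cons, size_node]
        omega
      · rw [labelAt, show F.take (l-1) ++ [PTree.node y []] ++ F.drop (l-1)
              = F.take (l-1) ++ PTree.node y [] :: F.drop (l-1) by simp, treeAt_middle]
        rfl
      · rw [show F.take (l-1) ++ [PTree.node y []] ++ F.drop (l-1)
              = F.take (l-1) ++ PTree.node y [] :: F.drop (l-1) by simp, applyDel_middle]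
        simp
    · rw [if_neg heq]
      set C := (F.drop (l-1)).take (r-l) with hC
      refine ⟨sizeL (F.take (l-1)) + 1, by omega, ?_, ?_, ?_⟩
      · rw [show F.take (l-1) ++ [PTree.node y C] ++ F.drop (r-1)
              = F.take (l-1) ++ (PTree.node y C :: F.drop (r-1)) by simp,
            sizeL_append, sizeL_cons, size_node]
        omega
      · rw [labelAt, show F.take (l-1) ++ [PTree.node y C] ++ F.drop (r-1)
              = F.take (l-1) ++ PTree.node y C :: F.drop (r-1) by simp, treeAt_middle]
        rfl
      · rw [show F.take (l-1) ++ [PTree.node y C] ++ F.drop (r-1)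
              = F.take (l-1) ++ PTree.node y C :: F.drop (r-1) by simp, applyDel_middle]
        rw [hC]
        have hdd : F.drop (r-1) = (F.drop (l-1)).drop (r-l) := by
          rw [List.drop_drop]
          congr 1
          omega
        rw [hdd, List.take_append_drop, List.take_append_drop]
  | j + 1, [] => left; rw [applyIns]
  | j + 1, .node a cs :: ts =>
    rw [applyIns]
    by_cases h1 : j + 1 ≤ size (PTree.node a cs)
    · rw [if_pos h1]
      rcases ins_inv j l r y cs with hcs | ⟨i, hi1, hi2, hi3, hi4⟩
      · left; rw [hcs]
      · right
        refine ⟨i + 1, by omega, ?_, ?_, ?_⟩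
        · rw [sizeL_cons, size_node]; omega
        · rw [labelAt, treeAt_left a _ ts (by omega) (by rw [size_node]; omega), ← labelAt]
          simpa using hi3
        · rw [applyDel, if_neg (by omega), if_neg (by omega),
              if_pos (by rw [size_node]; omega)]
          simp only [Nat.add_sub_cancel]
          rw [hi4]
    · rw [if_neg h1]
      rcases ins_inv (j + 1 - size (PTree.node a cs)) l r y ts with hts | ⟨i, hi1, hi2, hi3, hi4⟩
      · left; rw [hts]
      · right
        have hpos := size_pos (PTree.node a cs)
        refine ⟨i + size (PTree.node a cs), by omega, ?_, ?_, ?_⟩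
        · rw [sizeL_cons]; omega
        · rw [labelAt, treeAt_right a cs _ (by omega), ← labelAt]
          have : i + size (PTree.node a cs) - size (PTree.node a cs) = i := by omega
          rw [this]
          exact hi3
        · rw [applyDel, if_neg (by omega), if_neg (by omega), if_neg (by omega)]
          have : i + size (PTree.node a cs) - size (PTree.node a cs) = i := by omega
          rw [this, hi4]
  termination_by sizeOf F

/-- Inverse of a single edit, with matching cost under a symmetric cost function. -/
theorem edit_inverse (e : Edit α) (F : Forest α) :
    ∃ e' : Edit α, e'.apply (e.apply F) = F ∧
      ∀ c : Cost α, Symm c → editCost c e' (e.apply F) = editCost c e F := by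
  by_cases h0 : e.apply F = F
  · exact ⟨e, by rw [h0, h0], fun c _ => by rw [h0]⟩
  match e with
  | .del i =>
    rcases del_inv i F with h | ⟨a, cs, j, l, r, h1, h2, h3, h4, h5⟩
    · exact absurd h h0
    refine ⟨.ins j a l r, h5, fun c hc => ?_⟩
    have hne : ¬ (Edit.apply (.ins j a l r) (Edit.apply (.del i) F)
        = Edit.apply (.del i) F) := by
      show ¬ applyIns a l r j (applyDel i F) = applyDel i F
      rw [h5]
      intro hcontra
      exact h0 hcontra.symm
    rw [editCost, editCost, if_neg hne, if_neg h0]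
    have : labelAt F i = some a := by rw [labelAt, h1]; rfl
    rw [this]
    exact hc none (some a)
  | .rep i y =>
    rcases rep_inv i y F with h | ⟨a, h1, h2, h3⟩
    · exact absurd h h0
    refine ⟨.rep i a, h3, fun c hc => ?_⟩
    have hne : ¬ (Edit.apply (.rep i a) (Edit.apply (.rep i y) F)
        = Edit.apply (.rep i y) F) := by
      show ¬ applyRep a i (applyRep y i F) = applyRep y i F
      rw [h3]
      intro hcontra
      exact h0 hcontra.symm
    rw [editCost, editCost, if_neg hne, if_neg h0]
    show c (labelAt (applyRep y i F) i) (some a) = c (labelAt F i) (some y)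
    rw [h1, h2]
    exact hc (some y) (some a)
  | .ins j y l r =>
    rcases ins_inv j l r y F with h | ⟨i, hi1, hi2, hi3, hi4⟩
    · exact absurd h h0
    refine ⟨.del i, hi4, fun c hc => ?_⟩
    have hne : ¬ (Edit.apply (.del i) (Edit.apply (.ins j y l r) F)
        = Edit.apply (.ins j y l r) F) := by
      show ¬ applyDel i (applyIns y l r j F) = applyIns y l r j F
      rw [hi4]
      intro hcontra
      exact h0 hcontra.symm
    rw [editCost, editCost, if_neg hne, if_neg h0]
    show c (labelAt (applyIns y l r j F) i) none = c none (some y)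
    rw [hi3]
    exact hc (some y) none

theorem applyScript_append (l₁ l₂ : List (Edit α)) (F : Forest α) :
    applyScript (l₁ ++ l₂) F = applyScript l₂ (applyScript l₁ F) := by
  simp [applyScript, List.foldl_append]

theorem scriptCost_append_singleton (c : Cost α) (l : List (Edit α)) (e : Edit α)
    (F : Forest α) :
    scriptCost c (l ++ [e]) F = scriptCost c l F + editCost c e (applyScript l F) := by
  induction l generalizing F with
  | nil => simp [scriptCost, applyScript]
  | cons e' es ih =>
    simp only [List.cons_append, scriptCost, List.append_eq]
    rw [ih]
    have : applyScript (e' :: es) F = applyScript es (e'.apply F) := by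
      simp [applyScript]
    rw [this, add_assoc]

theorem script_inverse (δ : List (Edit α)) (F : Forest α) :
    ∃ δinv : List (Edit α),
      δinv.length = δ.length ∧
      applyScript δinv (applyScript δ F) = F ∧
      ∀ c : Cost α, Symm c → scriptCost c δinv (applyScript δ F) = scriptCost c δ F := by
  induction δ generalizing F with
  | nil => exact ⟨[], rfl, rfl, fun _ _ => rfl⟩
  | cons e es ih =>
    obtain ⟨δ₁, hlen, happ, hcost⟩ := ih (e.apply F)
    obtain ⟨e', he1, he2⟩ := edit_inverse e F
    refine ⟨δ₁ ++ [e'], by simp [hlen], ?_, ?_⟩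
    · have hG : applyScript (e :: es) F = applyScript es (e.apply F) := by
        simp [applyScript]
      rw [hG, applyScript_append, happ]
      exact he1
    · intro c hc
      have hG : applyScript (e :: es) F = applyScript es (e.apply F) := by
        simp [applyScript]
      rw [hG, scriptCost_append_singleton, happ, he2 c hc, hcost c hc]
      show scriptCost c es (e.apply F) + editCost c e F = scriptCost c (e :: es) F
      rw [scriptCost, add_comm]

end Aux

/-- For every edit script `δ̄` with `δ̄(x̄) = ȳ` there exists an inverse
edit script `δ̄⁻¹` of the same length with `δ̄⁻¹(ȳ) = x̄`; moreover, if the cost function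
`c` is symmetric, then `c(δ̄⁻¹, ȳ) = c(δ̄, x̄)`. -/
theorem exists_inverse_script {α : Type} (x y : PTree α) (δ : List (Edit α))
    (h : applyScript δ [x] = [y]) :
    ∃ δinv : List (Edit α),
      δinv.length = δ.length ∧
      applyScript δinv [y] = [x] ∧
      ∀ c : Cost α, Symm c → scriptCost c δinv [y] = scriptCost c δ [x] := by
  obtain ⟨δinv, hlen, happ, hcost⟩ := script_inverse δ [x]
  rw [h] at happ hcost
  exact ⟨δinv, hlen, happ, hcost⟩

end TED
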